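/- Let E ⊆ ℝ^d and h ∈ 𝒟. If 0 < 𝒫^h(E) and E is a countable union of sets of finite 𝒫^h measure (i.e., 𝒫^h restricted to E is σ-finite and nontrivial), then E has non-σ-finite 𝒫^g measure for every g ∈ 𝒟 with g ≺ h. -/

import Mathlib

open Set Metric Filter Topology
open scoped ENNReal

/-- `h` is a dimension function: continuous and nondecreasing on `(0,∞)`, positive
there, and tending to `0` as `t → 0⁺`. -/
def IsDimFun (h : ℝ → ℝ) : Prop :=
  ContinuousOn h (Ioi 0) ∧ MonotoneOn h (Ioi 0) ∧ (∀ t, 0 < t → 0 < h t) ∧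
    Tendsto h (𝓝[>] (0:ℝ)) (𝓝 0)

/-- `g ≺ h` : `g` is a smaller dimension than `h`, i.e. `lim_{t→0⁺} h(t)/g(t) = 0`. -/
def DimLT (g h : ℝ → ℝ) : Prop :=
  Tendsto (fun t => h t / g t) (𝓝[>] (0:ℝ)) (𝓝 0)

/-- `h ∈ 𝒟_d`: `h` is a doubling, at most `d`-dimensional dimension function. -/
def IsDimFunD (d : ℕ) (h : ℝ → ℝ) : Prop :=
  IsDimFun h ∧ (∃ c₀ > (0:ℝ), ∀ t > (0:ℝ), t ^ d ≤ c₀ * h t) ∧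
    ∃ c₁ > (0:ℝ), ∀ t > (0:ℝ), h (2 * t) ≤ c₁ * h t

/-- `P_δ^h(E)`: supremum of `∑ h(|Bᵢ|)` over countable `δ`-packings of `E`, where a
`δ`-packing is a countable collection of pairwise disjoint open balls centered at
points of `E` with diameters (`= 2r`) less than `δ`. -/
noncomputable def packingPre (d : ℕ) (h : ℝ → ℝ) (δ : ℝ)
    (E : Set (EuclideanSpace ℝ (Fin d))) : ℝ≥0∞ :=
  ⨆ (c : ℕ → EuclideanSpace ℝ (Fin d)) (r : ℕ → ℝ) (s : Set ℕ)
    (_ : ∀ i ∈ s, c i ∈ E) (_ : ∀ i ∈ s, 0 < r i) (_ : ∀ i ∈ s, 2 * r i < δ)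
    (_ : s.PairwiseDisjoint fun i => ball (c i) (r i)),
    ∑' i : s, ENNReal.ofReal (h (2 * r (i : ℕ)))

/-- The packing premeasure `P_0^h(E) = inf_{δ>0} P_δ^h(E)`. -/
noncomputable def packingPre0 (d : ℕ) (h : ℝ → ℝ)
    (E : Set (EuclideanSpace ℝ (Fin d))) : ℝ≥0∞ :=
  ⨅ (δ : ℝ) (_ : 0 < δ), packingPre d h δ E

/-- The packing measure `𝒫^h(E)`. -/
noncomputable def packingMeasure (d : ℕ) (h : ℝ → ℝ)
    (E : Set (EuclideanSpace ℝ (Fin d))) : ℝ≥0∞ :=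
  ⨅ (F : ℕ → Set (EuclideanSpace ℝ (Fin d))) (_ : E ⊆ ⋃ j, F j),
    ∑' j, packingPre0 d h (F j)

/-- `E` has non-σ-finite `𝒫^h` measure: `E` is not a countable union of sets of
finite `𝒫^h` measure. -/
def NonSigmaFinitePacking (d : ℕ) (h : ℝ → ℝ)
    (E : Set (EuclideanSpace ℝ (Fin d))) : Prop :=
  ¬ ∃ F : ℕ → Set (EuclideanSpace ℝ (Fin d)),
      E ⊆ ⋃ j, F j ∧ ∀ j, packingMeasure d h (F j) < ⊤

/-- `A ⊆ ℝ^d` is analytic: a continuous image of `ℕ^ℕ`. -/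
def IsAnalyticSet' (d : ℕ) (A : Set (EuclideanSpace ℝ (Fin d))) : Prop :=
  ∃ φ : (ℕ → ℕ) → EuclideanSpace ℝ (Fin d), Continuous φ ∧ A = Set.range φ

lemma packingPre_mono_delta (d : ℕ) (h : ℝ → ℝ) {δ δ' : ℝ} (hδ : δ ≤ δ')
    (S : Set (EuclideanSpace ℝ (Fin d))) :
    packingPre d h δ S ≤ packingPre d h δ' S := by
  refine iSup_le fun c => iSup_le fun r => iSup_le fun s => iSup_le fun h1 =>
    iSup_le fun h2 => iSup_le fun h3 => iSup_le fun h4 => ?_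
  exact le_iSup_of_le c (le_iSup_of_le r (le_iSup_of_le s (le_iSup_of_le h1
    (le_iSup_of_le h2 (le_iSup_of_le (fun i hi => lt_of_lt_of_le (h3 i hi) hδ)
    (le_iSup_of_le h4 le_rfl))))))

lemma packingPre0_le_mul (d : ℕ) {g h : ℝ → ℝ} {ε δ₀ : ℝ} (hε : 0 ≤ ε) (hδ₀ : 0 < δ₀)
    (hcomp : ∀ t, 0 < t → t < δ₀ → h t ≤ ε * g t)
    (S : Set (EuclideanSpace ℝ (Fin d))) :
    packingPre0 d h S ≤ ENNReal.ofReal ε * packingPre0 d g S := by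
  have key : ∀ δ : ℝ, 0 < δ →
      packingPre0 d h S ≤ ENNReal.ofReal ε * packingPre d g δ S := by
    intro δ hδ
    have hδ' : (0:ℝ) < min δ δ₀ := lt_min hδ hδ₀
    have step1 : packingPre0 d h S ≤ packingPre d h (min δ δ₀) S :=
      iInf₂_le _ hδ'
    have step2 : packingPre d h (min δ δ₀) S ≤
        ENNReal.ofReal ε * packingPre d g (min δ δ₀) S := by
      refine iSup_le fun c => iSup_le fun r => iSup_le fun s => iSup_le fun h1 =>
        iSup_le fun h2 => iSup_le fun h3 => iSup_le fun h4 => ?_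
      have hb : (∑' i : s, ENNReal.ofReal (h (2 * r (i : ℕ)))) ≤
          ENNReal.ofReal ε * ∑' i : s, ENNReal.ofReal (g (2 * r (i : ℕ))) := by
        rw [← ENNReal.tsum_mul_left]
        refine ENNReal.tsum_le_tsum fun i => ?_
        rw [← ENNReal.ofReal_mul hε]
        refine ENNReal.ofReal_le_ofReal ?_
        have h2r : 0 < 2 * r (i : ℕ) := mul_pos two_pos (h2 _ i.2)
        exact hcomp _ h2r (lt_of_lt_of_le (h3 _ i.2) (min_le_right _ _))
      refine hb.trans (mul_le_mul_right ?_ _)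
      exact le_iSup_of_le c (le_iSup_of_le r (le_iSup_of_le s (le_iSup_of_le h1
        (le_iSup_of_le h2 (le_iSup_of_le h3 (le_iSup_of_le h4 le_rfl))))))
    exact step1.trans (step2.trans (mul_le_mul_right
      (packingPre_mono_delta d g (min_le_left _ _) S) _))
  have hne : Nonempty {δ : ℝ // 0 < δ} := ⟨⟨1, one_pos⟩⟩
  have : packingPre0 d g S = ⨅ p : {δ : ℝ // 0 < δ}, packingPre d g p S := by
    rw [packingPre0, iInf_subtype']
  rw [this, ENNReal.mul_iInf (fun ht => absurd ht ENNReal.ofReal_ne_top)]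
  exact le_iInf fun p => key p p.2

lemma dimlt_bound {g h : ℝ → ℝ} (hg : IsDimFun g) (hlt : DimLT g h) {η : ℝ} (hη : 0 < η) :
    ∃ δ₀ > (0:ℝ), ∀ t, 0 < t → t < δ₀ → h t ≤ η * g t := by
  obtain ⟨δ₀, hδ₀, H⟩ := Metric.tendsto_nhdsWithin_nhds.mp hlt η hη
  refine ⟨δ₀, hδ₀, fun t ht htδ => ?_⟩
  have := H (mem_Ioi.mpr ht) (by simpa [Real.dist_eq, abs_of_pos ht] using htδ)
  rw [Real.dist_eq, sub_zero] at this
  have hgt : 0 < g t := hg.2.2.1 t ht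
  have : h t / g t < η := lt_of_abs_lt this
  nlinarith [(div_lt_iff₀ hgt).mp this]

lemma packingMeasure_eq_zero_of_dimLT (d : ℕ) {g h : ℝ → ℝ} (hg : IsDimFun g)
    (hlt : DimLT g h) (F : Set (EuclideanSpace ℝ (Fin d)))
    (hfin : packingMeasure d g F < ⊤) : packingMeasure d h F = 0 := by
  have hlt' : packingMeasure d g F < packingMeasure d g F + 1 :=
    ENNReal.lt_add_right hfin.ne one_ne_zero
  rw [packingMeasure, iInf_lt_iff] at hlt'
  obtain ⟨C, hlt'⟩ := hlt'
  rw [iInf_lt_iff] at hlt'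
  obtain ⟨hC, hsum⟩ := hlt'
  set T : ℝ≥0∞ := ∑' j, packingPre0 d g (C j) with hT
  have hTne : T ≠ ⊤ := (hsum.trans (ENNReal.add_lt_top.mpr ⟨hfin, ENNReal.one_lt_top⟩)).ne
  refine le_antisymm ?_ zero_le
  refine ENNReal.le_of_forall_pos_le_add fun ε hε _ => ?_
  rw [zero_add]
  set η : ℝ := ε / (T.toReal + 1) with hηdef
  have hTpos : (0:ℝ) ≤ T.toReal := ENNReal.toReal_nonneg
  have hη : 0 < η := div_pos hε (by linarith)
  obtain ⟨δ₀, hδ₀, hcomp⟩ := dimlt_bound hg hlt hη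
  have step : packingMeasure d h F ≤ ∑' j, packingPre0 d h (C j) := iInf₂_le C hC
  have step2 : (∑' j, packingPre0 d h (C j)) ≤ ENNReal.ofReal η * T := by
    rw [hT, ← ENNReal.tsum_mul_left]
    exact ENNReal.tsum_le_tsum fun j => packingPre0_le_mul d hη.le hδ₀ hcomp (C j)
  refine (step.trans step2).trans ?_
  have : ENNReal.ofReal η * T = ENNReal.ofReal η * ENNReal.ofReal T.toReal := by
    rw [ENNReal.ofReal_toReal hTne]
  rw [this, ← ENNReal.ofReal_mul hη.le]
  calc ENNReal.ofReal (η * T.toReal) ≤ ENNReal.ofReal ε := by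
        refine ENNReal.ofReal_le_ofReal ?_
        rw [hηdef, div_mul_eq_mul_div, div_le_iff₀ (by linarith)]
        nlinarith [ε.coe_nonneg]
    _ = (ε : ℝ≥0∞) := ENNReal.ofReal_coe_nnreal

/-- if the restriction of the packing measure to `E` is σ-finite and
nontrivial, then `E` has non-σ-finite `𝒫^g` measure whenever `g ≺ h`. -/
theorem packing_nonsigmafinite_of_sigmaFinite_of_dimLT (d : ℕ) (h : ℝ → ℝ)
    (hh : IsDimFun h)
    (E : Set (EuclideanSpace ℝ (Fin d))) (hpos : 0 < packingMeasure d h E)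
    (hsf : ∃ F : ℕ → Set (EuclideanSpace ℝ (Fin d)),
      E ⊆ ⋃ j, F j ∧ ∀ j, packingMeasure d h (F j) < ⊤)
    (g : ℝ → ℝ) (hg : IsDimFun g) (hlt : DimLT g h) :
    NonSigmaFinitePacking d g E := by
  rintro ⟨C, hC, hfin⟩
  have hzero : ∀ j, packingMeasure d h (C j) = 0 := fun j =>
    packingMeasure_eq_zero_of_dimLT d hg hlt (C j) (hfin j)
  have hE0 : packingMeasure d h E = 0 := by
    refine le_antisymm ?_ zero_le
    refine ENNReal.le_of_forall_pos_le_add fun ε hε _ => ?_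
    rw [zero_add]
    obtain ⟨σ, hσpos, hσsum⟩ :=
      ENNReal.exists_pos_sum_of_countable (ENNReal.coe_ne_zero.mpr hε.ne') ℕ
    have hex : ∀ j, ∃ G : ℕ → Set (EuclideanSpace ℝ (Fin d)),
        C j ⊆ ⋃ k, G k ∧ (∑' k, packingPre0 d h (G k)) < σ j := by
      intro j
      have : packingMeasure d h (C j) < σ j := by
        rw [hzero j]; exact_mod_cast hσpos j
      rw [packingMeasure, iInf_lt_iff] at this
      obtain ⟨G, this⟩ := this
      rw [iInf_lt_iff] at this
      obtain ⟨h1, h2⟩ := this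
      exact ⟨G, h1, h2⟩
    choose G hG1 hG2 using hex
    set H : ℕ → Set (EuclideanSpace ℝ (Fin d)) := fun n =>
      G (Nat.pairEquiv.symm n).1 (Nat.pairEquiv.symm n).2 with hH
    have hHE : E ⊆ ⋃ n, H n := by
      intro x hx
      obtain ⟨_, ⟨j, rfl⟩, hxj⟩ := hC hx
      obtain ⟨_, ⟨k, rfl⟩, hxk⟩ := hG1 j hxj
      exact mem_iUnion.mpr ⟨Nat.pairEquiv (j, k), by
        simp only [hH, Equiv.symm_apply_apply]; exact hxk⟩
    calc packingMeasure d h E ≤ ∑' n, packingPre0 d h (H n) := iInf₂_le H hHE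
      _ = ∑' p : ℕ × ℕ, packingPre0 d h (G p.1 p.2) :=
          Nat.pairEquiv.symm.tsum_eq fun p => packingPre0 d h (G p.1 p.2)
      _ = ∑' j, ∑' k, packingPre0 d h (G j k) := ENNReal.tsum_prod (f := fun j k => packingPre0 d h (G j k))
      _ ≤ ∑' j, (σ j : ℝ≥0∞) := ENNReal.tsum_le_tsum fun j => (hG2 j).le
      _ ≤ (ε : ℝ≥0∞) := hσsum.le
  exact hpos.ne' hE0
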